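/- arXiv:2209.05103 — 4 statements merged into one kernel-verified Lean document; each statement's English description precedes it below -/
import Mathlib

section
/- Let J be a small category, let C and D be categories, and suppose D has colimits of shape J. If F, G : C ⥤ D are functors such that F is a retract of G in the functor category (i.e. there are natural transformations i : F ⟶ G and r : G ⟶ F with r ∘ i = id_F), and G preserves colimits of shape J, then F also preserves colimits of shape J. -/
open CategoryTheory CategoryTheory.Limits

universe w u₁ v₁ u₂ v₂

/-- If `F` is a retract of `G` in the functor category and `G` preserves colimits of
shape `J`, then so does `F`. -/
theorem stmt_0 {C : Type u₁} [Category.{v₁} C] {D : Type u₂} [Category.{v₂} D]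
    {J : Type w} [SmallCategory J] [HasColimitsOfShape J D]
    (F G : C ⥤ D) (i : F ⟶ G) (r : G ⟶ F) (hir : i ≫ r = 𝟙 F)
    [PreservesColimitsOfShape J G] :
    PreservesColimitsOfShape J F := by
  have hir' : ∀ X : C, i.app X ≫ r.app X = 𝟙 (F.obj X) := fun X => by
    rw [← NatTrans.comp_app, hir]; rfl
  constructor
  intro K
  constructor
  intro c hc
  constructor
  have hG := isColimitOfPreserves G hc
  refine
    { desc := fun s => i.app c.pt ≫ hG.desc ((Cocone.precompose (Functor.whiskerLeft K r)).obj s)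
      fac := ?_
      uniq := ?_ }
  · intro s j
    have := hG.fac ((Cocone.precompose (Functor.whiskerLeft K r)).obj s) j
    simp only [Functor.mapCocone_ι_app] at this ⊢
    rw [i.naturality_assoc, this]
    simp [reassoc_of% (hir' (K.obj j))]
  · intro s m hm
    have key : r.app c.pt ≫ m = hG.desc ((Cocone.precompose (Functor.whiskerLeft K r)).obj s) := by
      apply hG.uniq ((Cocone.precompose (Functor.whiskerLeft K r)).obj s)
      intro j
      simp only [Functor.mapCocone_ι_app]
      rw [r.naturality_assoc]
      have := hm j
      simp only [Functor.mapCocone_ι_app] at this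
      simp [this]
    rw [← key, ← Category.assoc, hir' c.pt]
    simp
end

section
/- Let C be a category, W a class of morphisms of C, and let L : C ⥤ D be a localization of C at W. If L admits a right adjoint G, then G is fully faithful, and an object X of C lies in the essential image of G if and only if X is W-local, i.e. for every morphism w : a ⟶ b in W the induced map Hom(b, X) ⟶ Hom(a, X) is a bijection. -/
open CategoryTheory

universe v₁ u₁ v₂ u₂

section Aux

variable {C : Type u₁} [Category.{v₁} C] {D : Type u₂} [Category.{v₂} D]

lemma aux_precomp_bij {a b Z : C} (f : a ⟶ b) [IsIso f] :
    Function.Bijective (fun g : b ⟶ Z => f ≫ g) := by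
  constructor
  · intro g₁ g₂ h
    dsimp at h
    rwa [cancel_epi] at h
  · intro g
    exact ⟨inv f ≫ g, by simp⟩

lemma aux_postcomp_bij {a Z Z' : C} (f : Z ⟶ Z') [IsIso f] :
    Function.Bijective (fun g : a ⟶ Z => g ≫ f) := by
  constructor
  · intro g₁ g₂ h
    dsimp at h
    rwa [cancel_mono] at h
  · intro g
    exact ⟨g ≫ inv f, by simp⟩

/-- objects in the image of `G` are `W`-local -/
lemma aux_G_local (W : MorphismProperty C) (L : C ⥤ D) [L.IsLocalization W]
    (G : D ⥤ C) (adj : L ⊣ G) (d : D) :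
    ∀ ⦃a b : C⦄ (w : a ⟶ b), W w →
      Function.Bijective (fun g : b ⟶ G.obj d => w ≫ g) := by
  intro a b w hw
  have : IsIso (L.map w) := Localization.inverts L W w hw
  have heq : (fun g : b ⟶ G.obj d => w ≫ g) =
      (adj.homEquiv a d) ∘ (fun g : L.obj b ⟶ d => L.map w ≫ g) ∘ (adj.homEquiv b d).symm := by
    funext g
    dsimp
    rw [Adjunction.homEquiv_naturality_left, Equiv.apply_symm_apply]
  rw [heq]
  exact (adj.homEquiv a d).bijective.comp ((aux_precomp_bij (L.map w)).comp
    (adj.homEquiv b d).symm.bijective)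

/-- `W`-local objects see `L`-inverted maps as iso -/
lemma aux_local_inverted (W : MorphismProperty C) (L : C ⥤ D) [L.IsLocalization W]
    {X : C} (hX : ∀ ⦃a b : C⦄ (w : a ⟶ b), W w →
      Function.Bijective (fun g : b ⟶ X => w ≫ g))
    {a b : C} (f : a ⟶ b) (hf : IsIso (L.map f)) :
    Function.Bijective (fun g : b ⟶ X => f ≫ g) := by
  have hinv : W.op.IsInvertedBy (yoneda.obj X) := by
    rintro ⟨b'⟩ ⟨a'⟩ φ hφ
    rw [CategoryTheory.isIso_iff_bijective]
    exact hX φ.unop hφ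
  let F' := Localization.lift (yoneda.obj X) hinv L.op
  let e : L.op ⋙ F' ≅ yoneda.obj X := Localization.fac (yoneda.obj X) hinv L.op
  have h := e.hom.naturality f.op
  have : IsIso ((L.op ⋙ F').map f.op) := by
    show IsIso (F'.map ((L.map f).op))
    infer_instance
  have : IsIso ((yoneda.obj X).map f.op) := by
    rw [← IsIso.inv_comp_eq] at h
    rw [← h]
    infer_instance
  have hb := (CategoryTheory.isIso_iff_bijective ((yoneda.obj X).map f.op)).1 this
  convert hb using 1
  rfl

end Aux

/-- If `L : C ⥤ D` is a localization of `C` at `W` admitting a right adjoint `G`, then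
`G` is fully faithful and an object `X` of `C` lies in the essential image of `G` if and
only if `X` is `W`-local, i.e. every `w : a ⟶ b` in `W` induces a bijection
`Hom(b, X) ⟶ Hom(a, X)`. -/
theorem stmt_10 {C : Type u₁} [Category.{v₁} C] {D : Type u₂} [Category.{v₂} D]
    (W : MorphismProperty C) (L : C ⥤ D) [L.IsLocalization W]
    (G : D ⥤ C) (adj : L ⊣ G) :
    G.Full ∧ G.Faithful ∧
      ∀ X : C, G.essImage X ↔
        ∀ ⦃a b : C⦄ (w : a ⟶ b), W w →
          Function.Bijective (fun g : b ⟶ X => w ≫ g) := by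
  -- the counit is an isomorphism
  haveI : ((Functor.whiskeringLeft C D D).obj L).Full := Localization.full_whiskeringLeft L W D
  haveI : ((Functor.whiskeringLeft C D D).obj L).Faithful := Localization.faithful_whiskeringLeft L W D
  haveI : IsIso (adj.whiskerLeft D).counit := Adjunction.counit_isIso_of_R_fully_faithful _
  haveI : IsIso ((adj.whiskerLeft D).counit.app (𝟭 D)) := inferInstance
  have hε : ∀ (Y : D), IsIso (adj.counit.app Y) := by
    intro Y
    have h : IsIso (((adj.whiskerLeft D).counit.app (𝟭 D)).app Y) := inferInstance
    have : ((adj.whiskerLeft D).counit.app (𝟭 D)).app Y = adj.counit.app Y := by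
      simp [Adjunction.whiskerLeft]
    rwa [this] at h
  haveI : IsIso adj.counit := NatIso.isIso_of_isIso_app _
  have hff : G.FullyFaithful := adj.fullyFaithfulROfIsIsoCounit
  refine ⟨hff.full, hff.faithful, fun X => ⟨?_, ?_⟩⟩
  · rintro ⟨d, ⟨e⟩⟩
    intro a b w hw
    have hb := aux_G_local W L G adj d w hw
    have heq : (fun g : b ⟶ X => w ≫ g) =
        (fun g : a ⟶ G.obj d => g ≫ e.hom) ∘ (fun g : b ⟶ G.obj d => w ≫ g)
          ∘ (fun g : b ⟶ X => g ≫ e.inv) := by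
      funext g; simp
    rw [heq]
    exact (aux_postcomp_bij e.hom).comp (hb.comp (aux_postcomp_bij e.inv))
  · intro hX
    -- `η_X` is an isomorphism
    have hLη : IsIso (L.map (adj.unit.app X)) := by
      have h := adj.left_triangle_components X
      exact ⟨⟨adj.counit.app (L.obj X), h, by
        rw [← cancel_mono (adj.counit.app (L.obj X))]
        simp [reassoc_of% h]⟩⟩
    have hGL := aux_G_local W L G adj (L.obj X)
    obtain ⟨r, hr⟩ := (aux_local_inverted W L hX (adj.unit.app X) hLη).2 (𝟙 X)
    have hr' : adj.unit.app X ≫ r = 𝟙 X := hr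
    have hinj := (aux_local_inverted W L hGL (adj.unit.app X) hLη).1
    have : r ≫ adj.unit.app X = 𝟙 (G.obj (L.obj X)) := by
      apply hinj
      dsimp
      rw [← Category.assoc, hr', Category.id_comp, Category.comp_id]
    have : IsIso (adj.unit.app X) := ⟨r, hr', this⟩
    exact ⟨L.obj X, ⟨(asIso (adj.unit.app X)).symm⟩⟩
end

section
/- Let C be a small category. A functor F : PSh(C)ᵒᵖ ⥤ Type is representable if and only if F preserves all small limits (equivalently, F sends colimits in PSh(C) to limits in Type). -/
open CategoryTheory CategoryTheory.Limits Opposite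

universe u

/-- A functor `F : PSh(C)ᵒᵖ ⥤ Type` on the presheaf category of a small category `C` is
representable if and only if it preserves all small limits. -/
theorem stmt_14 {C : Type u} [SmallCategory C] (F : (Cᵒᵖ ⥤ Type u)ᵒᵖ ⥤ Type u) :
    F.IsRepresentable ↔ PreservesLimitsOfSize.{u, u} F := by
  constructor
  · intro h
    exact inferInstance
  · intro h
    haveI := h
    haveI h1 : PreservesColimitsOfSize.{u, u} F.rightOp := preservesColimitsOfSize_rightOp F
    let G : Cᵒᵖ ⥤ Type u := yoneda.op ⋙ F
    haveI h2 : PreservesColimitsOfSize.{u, u} (yoneda.obj G).rightOp :=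
      preservesColimitsOfSize_rightOp _
    let i : yoneda.op ⋙ yoneda.obj G ≅ G :=
      yonedaOpCompYonedaObj G ≪≫ Functor.isoWhiskerLeft G uliftFunctorTrivial ≪≫ G.rightUnitor
    let e : yoneda ⋙ F.rightOp ≅ yoneda ⋙ (yoneda.obj G).rightOp :=
      NatIso.ofComponents (fun c => (i.app (op c)).op) (by
        intro c c' f
        dsimp [Iso.op]
        rw [← op_comp, ← op_comp]
        congr 1
        exact (i.hom.naturality f.op).symm)
    have key : F.rightOp ≅ (yoneda.obj G).rightOp :=
      Presheaf.uniqueExtensionAlongULiftYoneda.{u} F.rightOp (Iso.refl _) ≪≫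
        (Presheaf.uniqueExtensionAlongULiftYoneda.{u} _ (Functor.isoWhiskerRight uliftYonedaIsoYoneda.{u} _ ≪≫
          e ≪≫ (Functor.isoWhiskerRight uliftYonedaIsoYoneda.{u} _).symm)).symm
    have key2 : yoneda.obj G ≅ F :=
      NatIso.ofComponents (fun P => (key.app P.unop).unop) (by
        intro P Q f
        have := key.hom.naturality f.unop
        simpa using congrArg Quiver.Hom.unop this.symm)
    exact isRepresentable_of_natIso _ key2
end

section
/- Let κ be an uncountable regular cardinal. A simplicial set X is a κ-presentable object of the category of simplicial sets (i.e. Hom(X, −) preserves κ-filtered colimits) if and only if for every n ≥ 0 the set X_n of n-simplices has cardinality < κ. -/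
open CategoryTheory CategoryTheory.Limits Opposite

universe u

/-- A category `J` is `κ`-filtered if every diagram indexed by a `κ`-small category
(i.e. a category with fewer than `κ` morphisms) admits a cocone. -/
def IsCardinalFiltered (J : Type u) [SmallCategory J] (κ : Cardinal.{u}) : Prop :=
  ∀ (K : Type u) [SmallCategory K], Cardinal.mk (Σ (a : K) (b : K), a ⟶ b) < κ →
    ∀ F : K ⥤ J, Nonempty (Cocone F)

open CategoryTheory.GrothendieckTopology

instance : Countable SimplexCategory :=
  ⟨⟨SimplexCategory.len, fun a b h => SimplexCategory.ext h⟩⟩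

instance (a b : SimplexCategory) : Finite (a ⟶ b) :=
  Finite.of_injective (fun f => (SimplexCategory.Hom.toOrderHom f : Fin (a.len+1) → Fin (b.len+1)))
    (fun f g h => SimplexCategory.Hom.ext' f g (DFunLike.coe_injective h))

instance : Countable SimplexCategoryᵒᵖ :=
  Countable.of_equiv _ Opposite.equivToOpposite

instance (a b : SimplexCategoryᵒᵖ) : Finite (a ⟶ b) :=
  Finite.of_equiv _ (opEquiv a b).symm

lemma mk_sigma_hom_le (C : Type u) [SmallCategory C] [Quiver.IsThin C] :
    Cardinal.mk (Σ (a : C) (b : C), a ⟶ b) ≤ Cardinal.mk (C × C) := by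
  apply Cardinal.mk_le_of_injective (f := fun x => (x.1, x.2.1))
  rintro ⟨a, b, f⟩ ⟨a', b', f'⟩ h
  simp only [Prod.mk.injEq] at h
  obtain ⟨rfl, rfl⟩ := h
  have : f = f' := Subsingleton.elim _ _
  subst this; rfl

variable {κ : Cardinal.{u}} {J : Type u} [SmallCategory J]

lemma icf_isFiltered (hκ' : Cardinal.aleph0 ≤ κ) (hJ : IsCardinalFiltered J κ) : IsFiltered J := by
  apply IsFiltered.of_cocone_nonempty.{u}
  intro K _ _ F
  exact hJ K (lt_of_lt_of_le (Cardinal.lt_aleph0_of_finite _) hκ') F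

lemma icf_bound (hκ' : Cardinal.aleph0 ≤ κ) (hJ : IsCardinalFiltered J κ) {S : Type u}
    (hS : Cardinal.mk S < κ) (k : S → J) :
    ∃ (j : J) (_ : ∀ s, k s ⟶ j), True := by
  have thin : Quiver.IsThin (Discrete S) := fun a b => ⟨by rintro ⟨⟨h⟩⟩ ⟨⟨h'⟩⟩; rfl⟩
  have hcard : Cardinal.mk (Σ (a : Discrete S) (b : Discrete S), a ⟶ b) < κ := by
    refine lt_of_le_of_lt (mk_sigma_hom_le _) ?_
    have e : Discrete S × Discrete S ≃ S × S := Equiv.prodCongr discreteEquiv discreteEquiv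
    rw [Cardinal.mk_congr e, Cardinal.mk_prod]
    simp only [Cardinal.lift_id]
    exact Cardinal.mul_lt_of_lt hκ' hS hS
  obtain ⟨c⟩ := hJ (Discrete S) hcard (Discrete.functor k)
  exact ⟨c.pt, fun s => c.ι.app ⟨s⟩, trivial⟩

lemma icf_merge (hκ' : Cardinal.aleph0 ≤ κ) (hJ : IsCardinalFiltered J κ) {S : Type u}
    (hS : Cardinal.mk S < κ) (j₀ : J) (k : S → J) (v : ∀ s, j₀ ⟶ k s) :
    ∃ (j : J) (w : j₀ ⟶ j) (t : ∀ s, k s ⟶ j), ∀ s, v s ≫ t s = w := by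
  have hcard : Cardinal.mk (Σ (a : WidePushoutShape S) (b : WidePushoutShape S), a ⟶ b) < κ := by
    refine lt_of_le_of_lt (mk_sigma_hom_le _) ?_
    have : Cardinal.mk (WidePushoutShape S × WidePushoutShape S)
        = (Cardinal.mk S + 1) * (Cardinal.mk S + 1) := by
      simp [Cardinal.mk_prod, WidePushoutShape, Cardinal.mk_option]
    rw [this]
    have h1 : Cardinal.mk S + 1 < κ :=
      Cardinal.add_lt_of_lt hκ' hS (lt_of_lt_of_le Cardinal.one_lt_aleph0 hκ')
    exact Cardinal.mul_lt_of_lt hκ' h1 h1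
  obtain ⟨c⟩ := hJ (WidePushoutShape S) hcard (WidePushoutShape.wideSpan j₀ k v)
  refine ⟨c.pt, c.ι.app none, fun s => c.ι.app (some s), fun s => ?_⟩
  have := c.w (WidePushoutShape.Hom.init s)
  simp at this; exact this

lemma mk_sigma_lt {P : Type} [Countable P] (hκ : κ.IsRegular) (hunc : Cardinal.aleph0 < κ)
    (f : P → Type u) (hf : ∀ p, Cardinal.mk (f p) < κ) : Cardinal.mk (Σ p, f p) < κ := by
  have e : (Σ p, f p) ≃ Σ p : ULift.{u} P, f p.down :=
    (Equiv.sigmaCongrLeft (Equiv.ulift (α := P))).symm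
  rw [Cardinal.mk_congr e, Cardinal.mk_sigma]
  exact Cardinal.sum_lt_of_isRegular hκ
    (lt_of_le_of_lt Cardinal.mk_le_aleph0 hunc) (fun p => hf p.down)

lemma dir_backward (X : SSet.{u}) (hκ : κ.IsRegular) (huncountable : Cardinal.aleph0 < κ)
    (hX : ∀ n : ℕ, Cardinal.mk (X.obj (op (SimplexCategory.mk n))) < κ)
    (hJ : IsCardinalFiltered J κ) :
    PreservesColimitsOfShape J (coyoneda.obj (op X)) := by
  haveI : IsFiltered J := icf_isFiltered hκ.aleph0_le hJ
  have hSm : ∀ m : SimplexCategoryᵒᵖ, Cardinal.mk (X.obj m) < κ := by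
    intro m
    have := hX m.unop.len
    rwa [SimplexCategory.mk_len, op_unop] at this
  have hS : Cardinal.mk (Σ m : SimplexCategoryᵒᵖ, X.obj m) < κ :=
    mk_sigma_lt hκ huncountable _ hSm
  constructor
  intro F
  constructor
  intro c hc
  constructor
  have hm : ∀ m : SimplexCategoryᵒᵖ,
      IsColimit (((evaluation SimplexCategoryᵒᵖ (Type u)).obj m).mapCocone c) :=
    fun m => isColimitOfPreserves _ hc
  apply Types.FilteredColimit.isColimitOf
  · -- surjectivity
    intro f
    have rep : ∀ s : Σ m : SimplexCategoryᵒᵖ, X.obj m,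
        ∃ (j : J) (y : (F.obj j).obj s.1), (c.ι.app j).app s.1 y = f.app s.1 s.2 := by
      intro s
      obtain ⟨j, y, hy⟩ := Types.jointly_surjective _ (hm s.1) (f.app s.1 s.2)
      exact ⟨j, y, hy⟩
    choose j y hy using rep
    obtain ⟨j₀, u, -⟩ := icf_bound hκ.aleph0_le hJ hS j
    set z : ∀ s : Σ m : SimplexCategoryᵒᵖ, X.obj m, (F.obj j₀).obj s.1 :=
      fun s => (F.map (u s)).app s.1 (y s) with hzdef
    have hz : ∀ (m : SimplexCategoryᵒᵖ) (x : X.obj m),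
        (c.ι.app j₀).app m (z ⟨m, x⟩) = f.app m x := by
      intro m x
      have hw := ConcreteCategory.congr_hom (NatTrans.congr_app (c.w (u ⟨m, x⟩)) m) (y ⟨m, x⟩)
      rw [NatTrans.comp_app] at hw
      exact hw.trans (hy ⟨m, x⟩)
    -- the set of naturality conditions
    have hCnd : Cardinal.mk (Σ (p : Σ (m : SimplexCategoryᵒᵖ) (m' : SimplexCategoryᵒᵖ), m ⟶ m'),
        X.obj p.1) < κ := mk_sigma_lt hκ huncountable _ (fun p => hSm p.1)
    have key : ∀ cd : Σ (p : Σ (m : SimplexCategoryᵒᵖ) (m' : SimplexCategoryᵒᵖ), m ⟶ m'),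
        X.obj p.1, ∃ (k : J) (v : j₀ ⟶ k),
        (F.map v).app cd.1.2.1 ((F.obj j₀).map cd.1.2.2 (z ⟨cd.1.1, cd.2⟩))
          = (F.map v).app cd.1.2.1 (z ⟨cd.1.2.1, X.map cd.1.2.2 cd.2⟩) := by
      rintro ⟨⟨m, m', φ⟩, x⟩
      dsimp only
      have heq : (c.ι.app j₀).app m' ((F.obj j₀).map φ (z ⟨m, x⟩))
          = (c.ι.app j₀).app m' (z ⟨m', X.map φ x⟩) := by
        have h1 := ConcreteCategory.congr_hom ((c.ι.app j₀).naturality φ) (z ⟨m, x⟩)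
        have h2 := ConcreteCategory.congr_hom (f.naturality φ) x
        dsimp at h1 h2
        rw [h1, hz m x, ← h2, ← hz m' (X.map φ x)]
      obtain ⟨k, e1, e2, he⟩ :=
        (Types.FilteredColimit.isColimit_eq_iff
          (F ⋙ (evaluation SimplexCategoryᵒᵖ (Type u)).obj m') (hm m')).1 heq
      refine ⟨_, e1 ≫ IsFiltered.coeqHom e1 e2, ?_⟩
      have hco := IsFiltered.coeq_condition e1 e2
      have he' : (F.map e1).app m' ((F.obj j₀).map φ (z ⟨m, x⟩))
          = (F.map e2).app m' (z ⟨m', X.map φ x⟩) := he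
      calc (F.map (e1 ≫ IsFiltered.coeqHom e1 e2)).app m' ((F.obj j₀).map φ (z ⟨m, x⟩))
          = (F.map (IsFiltered.coeqHom e1 e2)).app m'
              ((F.map e1).app m' ((F.obj j₀).map φ (z ⟨m, x⟩))) := by
            rw [F.map_comp]; rfl
        _ = (F.map (IsFiltered.coeqHom e1 e2)).app m'
              ((F.map e2).app m' (z ⟨m', X.map φ x⟩)) := by rw [he']
        _ = (F.map (e2 ≫ IsFiltered.coeqHom e1 e2)).app m' (z ⟨m', X.map φ x⟩) := by
            rw [F.map_comp]; rfl
        _ = (F.map (e1 ≫ IsFiltered.coeqHom e1 e2)).app m' (z ⟨m', X.map φ x⟩) := by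
            rw [← hco]
    choose k v hv using key
    obtain ⟨jst, w, t, ht⟩ := icf_merge hκ.aleph0_le hJ hCnd j₀ k v
    have hw : ∀ (m m' : SimplexCategoryᵒᵖ) (φ : m ⟶ m') (x : X.obj m),
        (F.map w).app m' ((F.obj j₀).map φ (z ⟨m, x⟩))
          = (F.map w).app m' (z ⟨m', X.map φ x⟩) := by
      intro m m' φ x
      have hthis := hv ⟨⟨m, m', φ⟩, x⟩
      dsimp only at hthis
      have e : ∀ el : (F.obj j₀).obj m', (F.map w).app m' el
          = (F.map (t ⟨⟨m, m', φ⟩, x⟩)).app m' ((F.map (v ⟨⟨m, m', φ⟩, x⟩)).app m' el) := by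
        intro el
        rw [← ht ⟨⟨m, m', φ⟩, x⟩, F.map_comp]
        rfl
      rw [e, e, hthis]
    refine ⟨jst, { app := fun m => TypeCat.ofHom (fun x => (F.map w).app m (z ⟨m, x⟩)), naturality := ?_ }, ?_⟩
    · intro m m' φ
      ext x
      have h1 := ConcreteCategory.congr_hom ((F.map w).naturality φ) (z ⟨m, x⟩)
      dsimp at h1 ⊢
      rw [← hw m m' φ x, h1]
    · show f = _ ≫ c.ι.app jst
      apply NatTrans.ext
      funext m; ext x
      have h2 := ConcreteCategory.congr_hom (NatTrans.congr_app (c.w w) m) (z ⟨m, x⟩)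
      have h2' : (c.ι.app jst).app m ((F.map w).app m (z ⟨m, x⟩))
          = (c.ι.app j₀).app m (z ⟨m, x⟩) := h2
      exact (h2'.trans (hz m x)).symm
  · -- injectivity
    intro i j gi gj hone
    have hone' : gi ≫ c.ι.app i = gj ≫ c.ι.app j := hone
    set h1 : X ⟶ F.obj (IsFiltered.max i j) := gi ≫ F.map (IsFiltered.leftToMax i j) with hh1
    set h2 : X ⟶ F.obj (IsFiltered.max i j) := gj ≫ F.map (IsFiltered.rightToMax i j) with hh2
    have hh : ∀ s : Σ m : SimplexCategoryᵒᵖ, X.obj m,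
        (c.ι.app (IsFiltered.max i j)).app s.1 (h1.app s.1 s.2)
          = (c.ι.app (IsFiltered.max i j)).app s.1 (h2.app s.1 s.2) := by
      intro s
      have e1 := ConcreteCategory.congr_hom (NatTrans.congr_app (c.w (IsFiltered.leftToMax i j)) s.1)
        (gi.app s.1 s.2)
      have e2 := ConcreteCategory.congr_hom (NatTrans.congr_app (c.w (IsFiltered.rightToMax i j)) s.1)
        (gj.app s.1 s.2)
      have e3 := ConcreteCategory.congr_hom (NatTrans.congr_app hone' s.1) s.2
      exact e1.trans (e3.trans e2.symm)
    have key2 : ∀ s : Σ m : SimplexCategoryᵒᵖ, X.obj m,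
        ∃ (k : J) (v : IsFiltered.max i j ⟶ k),
        (F.map v).app s.1 (h1.app s.1 s.2) = (F.map v).app s.1 (h2.app s.1 s.2) := by
      intro s
      obtain ⟨k, e1, e2, he⟩ :=
        (Types.FilteredColimit.isColimit_eq_iff
          (F ⋙ (evaluation SimplexCategoryᵒᵖ (Type u)).obj s.1) (hm s.1)).1 (hh s)
      refine ⟨_, e1 ≫ IsFiltered.coeqHom e1 e2, ?_⟩
      have hco := IsFiltered.coeq_condition e1 e2
      have he' : (F.map e1).app s.1 (h1.app s.1 s.2) = (F.map e2).app s.1 (h2.app s.1 s.2) := he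
      calc (F.map (e1 ≫ IsFiltered.coeqHom e1 e2)).app s.1 (h1.app s.1 s.2)
          = (F.map (IsFiltered.coeqHom e1 e2)).app s.1 ((F.map e1).app s.1 (h1.app s.1 s.2)) := by
            rw [F.map_comp]; rfl
        _ = (F.map (IsFiltered.coeqHom e1 e2)).app s.1 ((F.map e2).app s.1 (h2.app s.1 s.2)) := by
            rw [he']
        _ = (F.map (e2 ≫ IsFiltered.coeqHom e1 e2)).app s.1 (h2.app s.1 s.2) := by
            rw [F.map_comp]; rfl
        _ = (F.map (e1 ≫ IsFiltered.coeqHom e1 e2)).app s.1 (h2.app s.1 s.2) := by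
            rw [← hco]
    choose k2 v2 hv2 using key2
    obtain ⟨jst, w, t, ht⟩ := icf_merge hκ.aleph0_le hJ hS (IsFiltered.max i j) k2 v2
    refine ⟨jst, IsFiltered.leftToMax i j ≫ w, IsFiltered.rightToMax i j ≫ w, ?_⟩
    show gi ≫ F.map (IsFiltered.leftToMax i j ≫ w) = gj ≫ F.map (IsFiltered.rightToMax i j ≫ w)
    apply NatTrans.ext
    funext m; ext x
    have hx : (F.map w).app m (h1.app m x) = (F.map w).app m (h2.app m x) := by
      have hthis := hv2 ⟨m, x⟩
      dsimp only at hthis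
      have e : ∀ el : (F.obj (IsFiltered.max i j)).obj m, (F.map w).app m el
          = (F.map (t ⟨m, x⟩)).app m ((F.map (v2 ⟨m, x⟩)).app m el) := by
        intro el
        rw [← ht ⟨m, x⟩, F.map_comp]
        rfl
      rw [e, e, hthis]
    have d1 : (F.map (IsFiltered.leftToMax i j ≫ w)).app m (gi.app m x)
        = (F.map w).app m (h1.app m x) := by rw [F.map_comp]; rfl
    have d2 : (F.map (IsFiltered.rightToMax i j ≫ w)).app m (gj.app m x)
        = (F.map w).app m (h2.app m x) := by rw [F.map_comp]; rfl
    exact d1.trans (hx.trans d2.symm)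

section Sub

variable (X : SSet.{u})

/-- The sub-simplicial-set generated by a single simplex. -/
def genSub (m : SimplexCategoryᵒᵖ) (x : X.obj m) : Subfunctor X where
  obj m' := Set.range (fun f : m ⟶ m' => X.map f x)
  map := by
    rintro m' m'' i _ ⟨f, rfl⟩
    exact ⟨f ≫ i, FunctorToTypes.map_comp_apply X f i x⟩

lemma genSub_self (m : SimplexCategoryᵒᵖ) (x : X.obj m) : x ∈ (genSub X m x).obj m :=
  ⟨𝟙 m, FunctorToTypes.map_id_apply X x⟩

lemma genSub_small (m : SimplexCategoryᵒᵖ) (x : X.obj m) :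
    Cardinal.mk (Σ m', (genSub X m x).obj m') ≤ Cardinal.aleph0 := by
  haveI : ∀ m' : SimplexCategoryᵒᵖ, Countable ((genSub X m x).obj m') :=
    fun m' => (Set.countable_range _).to_subtype
  exact Cardinal.mk_le_aleph0

/-- Union of a family of subpresheaves. -/
def unionSub {ι : Type u} (A : ι → Subfunctor X) : Subfunctor X where
  obj m := ⋃ i, (A i).obj m
  map := by
    intro m m' f x hx
    obtain ⟨i, hi⟩ := Set.mem_iUnion.1 hx
    exact Set.mem_iUnion.2 ⟨i, (A i).map f hi⟩

lemma le_unionSub {ι : Type u} (A : ι → Subfunctor X) (i : ι) : A i ≤ unionSub X A :=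
  fun m x hx => Set.mem_iUnion.2 ⟨i, hx⟩

lemma unionSub_small {κ : Cardinal.{u}} (hκ : κ.IsRegular) {ι : Type u} (A : ι → Subfunctor X)
    (hι : Cardinal.mk ι < κ) (h : ∀ i, Cardinal.mk (Σ m, (A i).obj m) < κ) :
    Cardinal.mk (Σ m, (unionSub X A).obj m) < κ := by
  have hsurj : Function.Surjective
      (fun p : Σ i : ι, Σ m, (A i).obj m =>
        (⟨p.2.1, ⟨p.2.2.1, le_unionSub X A p.1 _ p.2.2.2⟩⟩ : Σ m, (unionSub X A).obj m)) := by
    rintro ⟨m, x, hx⟩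
    obtain ⟨i, hi⟩ := Set.mem_iUnion.1 hx
    exact ⟨⟨i, m, x, hi⟩, rfl⟩
  refine lt_of_le_of_lt (Cardinal.mk_le_of_surjective hsurj) ?_
  rw [Cardinal.mk_sigma]
  exact Cardinal.sum_lt_of_isRegular hκ hι h

end Sub

section Small

variable (X : SSet.{u}) (κ : Cardinal.{u})

/-- The poset of `κ`-small sub-simplicial sets of `X`. -/
def SmallSub (κ : Cardinal.{u}) : Type u :=
  {A : Subfunctor X // Cardinal.mk (Σ m, A.obj m) < κ}

instance : PartialOrder (SmallSub X κ) := Subtype.partialOrder _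

instance : SmallCategory (SmallSub X κ) := Preorder.smallCategory _

/-- The inclusion functor from small subcomplexes to simplicial sets. -/
def smallSubFunctor : SmallSub X κ ⥤ SSet.{u} where
  obj A := A.1.toFunctor
  map {A B} h := Subfunctor.homOfLe (leOfHom h)
  map_id A := by
    apply NatTrans.ext; funext m; ext x; exact rfl
  map_comp f g := by
    apply NatTrans.ext; funext m; ext x; exact rfl

/-- The canonical cocone on `smallSubFunctor` with point `X`. -/
def smallSubCocone : Cocone (smallSubFunctor X κ) where
  pt := X
  ι := { app := fun A => A.1.ι
         naturality := fun A B h => by apply NatTrans.ext; funext m; ext x; exact rfl }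

lemma smallSub_isCardinalFiltered (hκ : κ.IsRegular) (huncountable : Cardinal.aleph0 < κ) :
    IsCardinalFiltered (SmallSub X κ) κ := by
  intro K _ hK F
  have hKcard : Cardinal.mk K < κ := by
    refine lt_of_le_of_lt (Cardinal.mk_le_of_injective (f := fun k : K => (⟨k, k, 𝟙 k⟩ : Σ (a : K) (b : K), a ⟶ b)) ?_) hK
    intro a b h
    exact congrArg Sigma.fst h
  refine ⟨⟨⟨unionSub X (fun k => (F.obj k).1),
      unionSub_small X hκ _ hKcard (fun k => (F.obj k).2)⟩,
    { app := fun k => homOfLE (Subtype.coe_le_coe.1 (le_unionSub X (fun k => (F.obj k).1) k)),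
      naturality := fun a b f => Subsingleton.elim _ _ }⟩⟩

noncomputable def smallSub_isColimit (hκ : κ.IsRegular) (huncountable : Cardinal.aleph0 < κ) :
    IsColimit (smallSubCocone X κ) := by
  apply evaluationJointlyReflectsColimits
  intro m
  apply Types.FilteredColimit.isColimitOf
  · -- surjectivity
    intro x
    refine ⟨⟨genSub X m x, lt_of_le_of_lt (genSub_small X m x) huncountable⟩,
      ⟨x, genSub_self X m x⟩, rfl⟩
  · -- injectivity
    intro A B xa xb h
    have hle : Cardinal.mk (Σ m', (unionSub X (fun i : ULift.{u} Bool => if i.down then A.1 else B.1)).obj m') < κ := by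
      apply unionSub_small X hκ
      · exact lt_of_le_of_lt Cardinal.mk_le_aleph0 huncountable
      · rintro ⟨i⟩
        cases i
        · exact B.2
        · exact A.2
    refine ⟨⟨_, hle⟩, homOfLE ?_, homOfLE ?_, ?_⟩
    · exact Subtype.coe_le_coe.1
        (le_unionSub X (fun i : ULift.{u} Bool => if i.down then A.1 else B.1) (ULift.up true))
    · exact Subtype.coe_le_coe.1
        (le_unionSub X (fun i : ULift.{u} Bool => if i.down then A.1 else B.1) (ULift.up false))
    · apply Subtype.ext
      exact h

lemma dir_forward (hκ : κ.IsRegular) (huncountable : Cardinal.aleph0 < κ)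
    (H : ∀ (J : Type u) [SmallCategory J], IsCardinalFiltered J κ →
        PreservesColimitsOfShape J (coyoneda.obj (op X))) :
    ∀ n : ℕ, Cardinal.mk (X.obj (op (SimplexCategory.mk n))) < κ := by
  intro n
  have : PreservesColimitsOfShape (SmallSub X κ) (coyoneda.obj (op X)) :=
    H _ (smallSub_isCardinalFiltered X κ hκ huncountable)
  have hc : IsColimit ((coyoneda.obj (op X)).mapCocone (smallSubCocone X κ)) :=
    isColimitOfPreserves _ (smallSub_isColimit X κ hκ huncountable)
  obtain ⟨A, s, hs⟩ := Types.jointly_surjective _ hc (𝟙 X)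
  -- hs : s ≫ A.1.ι = 𝟙 X
  have hinj : Function.Injective (fun x : X.obj (op (SimplexCategory.mk n)) =>
      s.app (op (SimplexCategory.mk n)) x) := by
    intro a b h
    have ha := ConcreteCategory.congr_hom (NatTrans.congr_app hs (op (SimplexCategory.mk n))) a
    have hb := ConcreteCategory.congr_hom (NatTrans.congr_app hs (op (SimplexCategory.mk n))) b
    dsimp at ha hb
    have h' : s.app (op (SimplexCategory.mk n)) a = s.app (op (SimplexCategory.mk n)) b := h
    calc a = (s.app (op (SimplexCategory.mk n)) a).1 := ha.symm
    _ = (s.app (op (SimplexCategory.mk n)) b).1 := by rw [h']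
    _ = b := hb
  refine lt_of_le_of_lt (Cardinal.mk_le_of_injective hinj) ?_
  refine lt_of_le_of_lt (Cardinal.mk_le_of_injective
    (f := fun x : (A.1.obj (op (SimplexCategory.mk n))) => (⟨_, x⟩ : Σ m, A.1.obj m)) ?_) A.2
  intro a b h
  exact eq_of_heq (Sigma.mk.inj h).2

end Small

/-- For an uncountable regular cardinal `κ`, a simplicial set `X` is `κ`-presentable
(i.e. `Hom(X, -)` preserves `κ`-filtered colimits) if and only if for every `n ≥ 0` the
set `X_n` of `n`-simplices has cardinality `< κ`. -/
theorem stmt_15 (κ : Cardinal.{u}) (hκ : κ.IsRegular) (huncountable : Cardinal.aleph0 < κ)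
    (X : SSet.{u}) :
    (∀ (J : Type u) [SmallCategory J], IsCardinalFiltered J κ →
        PreservesColimitsOfShape J (coyoneda.obj (op X))) ↔
      ∀ n : ℕ, Cardinal.mk (X.obj (op (SimplexCategory.mk n))) < κ := by
  constructor
  · intro H
    exact dir_forward X κ hκ huncountable H
  · intro hX J _ hJ
    exact dir_backward X hκ huncountable hX hJ
end
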